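/- Let X and Y be finite nonempty sets, let α ∈ (0,1) ∪ (1,∞), let p be a strictly positive probability distribution on X, and let W be a channel from X to Y. Let p̃(x) = p(x)^{1/α} / ∑_{x'} p(x')^{1/α}. Then the Sibson mutual information of order α satisfies: inf over strictly positive probability distributions q on Y of (1/(α−1)) · log ∑_{x,y} p(x) · W(y|x)^α · q(y)^{1−α} = (1/(1−1/α)) · log ∑_{x∈X} p(x)^{1/α} − inf over strictly positive families r_{X|Y} of (α/(1−α)) · log ∑_{x,y} p̃(x) · W(y|x) · r(x|y)^{1−1/α}; in words, Sibson mutual information of order α equals the Rényi entropy of order 1/α of X minus the Sibson conditional entropy of order α of X given Y. -/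

import Mathlib

open Real BigOperators Finset Filter

lemma holder_row_gt {J : Type*} [Fintype J] {β : ℝ} (hβ : 1 < β)
    (C : J → ℝ) (hC : ∀ j, 0 ≤ C j) (r : J → ℝ) (hr : ∀ j, 0 < r j)
    (hr1 : (∑ j, r j) = 1) :
    (∑ j, C j ^ (1/β)) ^ β ≤ ∑ j, C j * r j ^ (1 - β) := by
  have hβ0 : (0:ℝ) < β := lt_trans one_pos hβ
  have hb1 : β - 1 ≠ 0 := sub_ne_zero.mpr (ne_of_gt hβ)
  have hconj : Real.HolderConjugate β (β/(β-1)) := by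
    rw [Real.holderConjugate_iff]
    constructor
    · exact hβ
    · field_simp; ring
  have hS0 : (0:ℝ) ≤ ∑ j, C j * r j ^ (1 - β) :=
    Finset.sum_nonneg fun j _ => mul_nonneg (hC j) (Real.rpow_nonneg (hr j).le _)
  have key : ∑ j, C j ^ (1/β) ≤ (∑ j, C j * r j ^ (1-β)) ^ (1/β) := by
    have H := Real.inner_le_Lp_mul_Lq_of_nonneg (s := Finset.univ)
      (f := fun j => (C j * r j ^ (1-β)) ^ (1/β)) (g := fun j => r j ^ ((β-1)/β)) hconj
      (fun j _ => Real.rpow_nonneg (mul_nonneg (hC j) (Real.rpow_nonneg (hr j).le _)) _)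
      (fun j _ => Real.rpow_nonneg (hr j).le _)
    have e1 : ∀ j : J, (C j * r j ^ (1-β)) ^ (1/β) * r j ^ ((β-1)/β) = C j ^ (1/β) := by
      intro j
      rw [Real.mul_rpow (hC j) (Real.rpow_nonneg (hr j).le _),
        ← Real.rpow_mul (hr j).le, mul_assoc, ← Real.rpow_add (hr j)]
      have : (1 - β) * (1/β) + (β-1)/β = 0 := by field_simp; ring
      rw [this, Real.rpow_zero, mul_one]
    have e2 : ∀ j : J, ((C j * r j ^ (1-β)) ^ (1/β)) ^ β = C j * r j ^ (1-β) := by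
      intro j
      rw [← Real.rpow_mul (mul_nonneg (hC j) (Real.rpow_nonneg (hr j).le _)),
        one_div_mul_cancel hβ0.ne', Real.rpow_one]
    have e3 : ∀ j : J, (r j ^ ((β-1)/β)) ^ (β/(β-1)) = r j := by
      intro j
      rw [← Real.rpow_mul (hr j).le, div_mul_div_comm]
      rw [show (β-1) * β / (β * (β-1)) = 1 by field_simp, Real.rpow_one]
    simp only [e1, e2, e3] at H
    rw [hr1, Real.one_rpow, mul_one] at H
    exact H
  calc (∑ j, C j ^ (1/β)) ^ β
      ≤ ((∑ j, C j * r j ^ (1-β)) ^ (1/β)) ^ β :=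
        Real.rpow_le_rpow (Finset.sum_nonneg fun j _ => Real.rpow_nonneg (hC j) _) key hβ0.le
    _ = ∑ j, C j * r j ^ (1-β) := by
        rw [← Real.rpow_mul hS0, one_div_mul_cancel hβ0.ne', Real.rpow_one]

lemma holder_row_lt {J : Type*} [Fintype J] {β : ℝ} (hβ0 : 0 < β) (hβ : β < 1)
    (C : J → ℝ) (hC : ∀ j, 0 ≤ C j) (r : J → ℝ) (hr : ∀ j, 0 < r j)
    (hr1 : (∑ j, r j) = 1) :
    ∑ j, C j * r j ^ (1 - β) ≤ (∑ j, C j ^ (1/β)) ^ β := by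
  have h1β : (0:ℝ) < 1 - β := by linarith
  have hconj : Real.HolderConjugate (1/β) (1/(1-β)) := by
    rw [Real.holderConjugate_iff]
    constructor
    · rw [lt_div_iff₀ hβ0]; linarith
    · field_simp; ring
  have H := Real.inner_le_Lp_mul_Lq_of_nonneg (s := Finset.univ)
    (f := C) (g := fun j => r j ^ (1-β)) hconj
    (fun j _ => hC j) (fun j _ => Real.rpow_nonneg (hr j).le _)
  have e2 : ∀ j : J, (r j ^ (1-β)) ^ (1/(1-β)) = r j := by
    intro j
    rw [← Real.rpow_mul (hr j).le, mul_one_div, div_self h1β.ne', Real.rpow_one]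
  simp only [e2] at H
  rw [hr1, one_div_one_div, one_div_one_div, Real.one_rpow, mul_one] at H
  exact H

lemma key_opt {I J : Type*} [Fintype I] [Fintype J] [Nonempty J]
    (β : ℝ) (hβ0 : 0 < β) (hβ1 : β ≠ 1)
    (C : I → J → ℝ) (hC : ∀ i j, 0 ≤ C i j) (hCpos : ∃ i j, 0 < C i j) :
    sInf {v : ℝ | ∃ r : I → J → ℝ, (∀ i j, 0 < r i j) ∧ (∀ i, (∑ j, r i j) = 1) ∧
        v = (1 / (β - 1)) * Real.log (∑ i, ∑ j, C i j * r i j ^ (1 - β))}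
      = (1 / (β - 1)) * Real.log (∑ i, (∑ j, (C i j) ^ (1/β)) ^ β) := by
  obtain ⟨i0, j0, hij⟩ := hCpos
  set M : I → ℝ := fun i => ∑ j, (C i j) ^ (1/β) with hMdef
  have hM0 : ∀ i, 0 ≤ M i := fun i => Finset.sum_nonneg fun j _ => Real.rpow_nonneg (hC i j) _
  have hMi0 : 0 < M i0 :=
    lt_of_lt_of_le (Real.rpow_pos_of_pos hij _)
      (Finset.single_le_sum (fun j _ => Real.rpow_nonneg (hC i0 j) _) (mem_univ j0))
  have hL0 : 0 < ∑ i, M i ^ β :=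
    Finset.sum_pos' (fun i _ => Real.rpow_nonneg (hM0 i) β)
      ⟨i0, mem_univ i0, Real.rpow_pos_of_pos hMi0 β⟩
  set L : ℝ := ∑ i, M i ^ β with hLdef
  set target : ℝ := (1 / (β - 1)) * Real.log L with htdef
  -- lower bound
  have hlb : ∀ v ∈ {v : ℝ | ∃ r : I → J → ℝ, (∀ i j, 0 < r i j) ∧ (∀ i, (∑ j, r i j) = 1) ∧
      v = (1 / (β - 1)) * Real.log (∑ i, ∑ j, C i j * r i j ^ (1 - β))}, target ≤ v := by
    rintro v ⟨r, hr, hr1, rfl⟩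
    have hS0 : 0 < ∑ i, ∑ j, C i j * r i j ^ (1 - β) := by
      refine Finset.sum_pos' (fun i _ => Finset.sum_nonneg fun j _ =>
        mul_nonneg (hC i j) (Real.rpow_nonneg (hr i j).le _)) ⟨i0, mem_univ i0, ?_⟩
      exact Finset.sum_pos' (fun j _ => mul_nonneg (hC i0 j) (Real.rpow_nonneg (hr i0 j).le _))
        ⟨j0, mem_univ j0, mul_pos hij (Real.rpow_pos_of_pos (hr i0 j0) _)⟩
    rcases lt_or_gt_of_ne hβ1 with h | h
    · -- β < 1
      have hSL : (∑ i, ∑ j, C i j * r i j ^ (1 - β)) ≤ L :=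
        Finset.sum_le_sum fun i _ => holder_row_lt hβ0 h (C i) (hC i) (r i) (hr i) (hr1 i)
      have hlog : Real.log (∑ i, ∑ j, C i j * r i j ^ (1 - β)) ≤ Real.log L :=
        Real.log_le_log hS0 hSL
      have hc : 1 / (β - 1) ≤ 0 := by
        apply div_nonpos_of_nonneg_of_nonpos zero_le_one
        linarith
      calc target = (1/(β-1)) * Real.log L := rfl
        _ ≤ (1/(β-1)) * Real.log (∑ i, ∑ j, C i j * r i j ^ (1 - β)) :=
            mul_le_mul_of_nonpos_left hlog hc
    · -- β > 1
      have hLS : L ≤ ∑ i, ∑ j, C i j * r i j ^ (1 - β) :=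
        Finset.sum_le_sum fun i _ => holder_row_gt h (C i) (hC i) (r i) (hr i) (hr1 i)
      have hlog : Real.log L ≤ Real.log (∑ i, ∑ j, C i j * r i j ^ (1 - β)) :=
        Real.log_le_log hL0 hLS
      have hc : 0 ≤ 1 / (β - 1) := le_of_lt (div_pos one_pos (by linarith))
      exact mul_le_mul_of_nonneg_left hlog hc
  have hbdd : BddBelow {v : ℝ | ∃ r : I → J → ℝ, (∀ i j, 0 < r i j) ∧ (∀ i, (∑ j, r i j) = 1) ∧
      v = (1 / (β - 1)) * Real.log (∑ i, ∑ j, C i j * r i j ^ (1 - β))} := ⟨target, hlb⟩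
  -- path of feasible points
  have hk : (0:ℝ) < (Fintype.card J : ℝ) := by
    exact_mod_cast Fintype.card_pos
  set ρ : ℝ → I → J → ℝ := fun t i j => ((C i j) ^ (1/β) + t) / (M i + t * (Fintype.card J : ℝ))
    with hρdef
  have hfeas : ∀ t : ℝ, 0 < t → (∀ i j, 0 < ρ t i j) ∧ (∀ i, (∑ j, ρ t i j) = 1) := by
    intro t ht
    have hden : ∀ i, 0 < M i + t * (Fintype.card J : ℝ) := fun i =>
      add_pos_of_nonneg_of_pos (hM0 i) (mul_pos ht hk)
    constructor
    · intro i j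
      exact div_pos (add_pos_of_nonneg_of_pos (Real.rpow_nonneg (hC i j) _) ht) (hden i)
    · intro i
      have hnum : (∑ j, ((C i j) ^ (1/β) + t)) = M i + t * (Fintype.card J : ℝ) := by
        rw [Finset.sum_add_distrib, Finset.sum_const, nsmul_eq_mul, Finset.card_univ]
        ring
      rw [← Finset.sum_div, hnum]
      exact div_self (hden i).ne'
  -- tendsto
  have htends : Tendsto (fun t => ∑ i, ∑ j, C i j * (ρ t i j) ^ (1 - β)) (nhdsWithin 0 (Set.Ioi 0))
      (nhds (∑ i, ∑ j, C i j * ((C i j) ^ (1/β) / M i) ^ (1 - β))) := by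
    apply tendsto_finset_sum
    intro i _
    apply tendsto_finset_sum
    intro j _
    by_cases hc : C i j = 0
    · simp only [hc, zero_mul]
      exact tendsto_const_nhds
    · have hcpos : 0 < C i j := (hC i j).lt_of_ne (Ne.symm hc)
      have hMip : 0 < M i :=
        lt_of_lt_of_le (Real.rpow_pos_of_pos hcpos _)
          (Finset.single_le_sum (fun j' _ => Real.rpow_nonneg (hC i j') _) (mem_univ j))
      have tid : Tendsto (fun t : ℝ => t) (nhdsWithin 0 (Set.Ioi 0)) (nhds 0) :=
        tendsto_id.mono_left nhdsWithin_le_nhds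
      have hnum : Tendsto (fun t : ℝ => (C i j) ^ (1/β) + t) (nhdsWithin 0 (Set.Ioi 0))
          (nhds ((C i j) ^ (1/β))) := by
        simpa using (tendsto_const_nhds (α := ℝ) (x := (C i j) ^ (1/β))).add tid
      have hden : Tendsto (fun t : ℝ => M i + t * (Fintype.card J : ℝ))
          (nhdsWithin 0 (Set.Ioi 0)) (nhds (M i)) := by
        simpa using (tendsto_const_nhds (α := ℝ) (x := M i)).add
          (tid.mul_const (Fintype.card J : ℝ))
      have hbase : Tendsto (fun t => ρ t i j) (nhdsWithin 0 (Set.Ioi 0))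
          (nhds ((C i j) ^ (1/β) / M i)) := hnum.div hden hMip.ne'
      have hbpos : (0:ℝ) < (C i j) ^ (1/β) / M i :=
        div_pos (Real.rpow_pos_of_pos hcpos _) hMip
      exact (hbase.rpow tendsto_const_nhds (Or.inl hbpos.ne')).const_mul _
  have hrowL : ∀ i, (∑ j, C i j * ((C i j) ^ (1/β) / M i) ^ (1 - β)) = M i ^ β := by
    intro i
    by_cases hMi : M i = 0
    · have hCz : ∀ j, C i j = 0 := by
        intro j
        have h0 := (Finset.sum_eq_zero_iff_of_nonneg
          (fun j' (_ : j' ∈ Finset.univ) => Real.rpow_nonneg (hC i j') (1/β))).mp hMi j (mem_univ j)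
        exact ((Real.rpow_eq_zero_iff_of_nonneg (hC i j)).mp h0).1
      simp [hCz, hMi, Real.zero_rpow hβ0.ne']
    · have hMip : 0 < M i := (hM0 i).lt_of_ne (Ne.symm hMi)
      have hterm : ∀ j, C i j * ((C i j) ^ (1/β) / M i) ^ (1 - β)
          = (C i j) ^ (1/β) / M i ^ (1 - β) := by
        intro j
        rw [Real.div_rpow (Real.rpow_nonneg (hC i j) _) hMip.le,
          ← Real.rpow_mul (hC i j)]
        rw [show C i j * ((C i j) ^ (1/β * (1 - β)) / M i ^ (1-β))
          = (C i j ^ (1:ℝ) * C i j ^ (1/β * (1 - β))) / M i ^ (1-β) by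
            rw [Real.rpow_one]; ring]
        rw [← Real.rpow_add' (hC i j) (by field_simp; simp [hβ0.ne'])]
        congr 2
        field_simp
        ring
      rw [Finset.sum_congr rfl (fun j _ => hterm j), ← Finset.sum_div]
      rw [show (∑ j, (C i j) ^ (1/β)) = M i from rfl,
        div_eq_iff (Real.rpow_pos_of_pos hMip (1-β)).ne', ← Real.rpow_add hMip,
        show β + (1 - β) = 1 by ring, Real.rpow_one]
  have htends2 : Tendsto (fun t => (1/(β-1)) * Real.log (∑ i, ∑ j, C i j * (ρ t i j) ^ (1 - β)))
      (nhdsWithin 0 (Set.Ioi 0)) (nhds target) := by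
    have : (∑ i, ∑ j, C i j * ((C i j) ^ (1/β) / M i) ^ (1 - β)) = L :=
      Finset.sum_congr rfl fun i _ => hrowL i
    rw [this] at htends
    exact (htends.log hL0.ne').const_mul _
  have hub : sInf {v : ℝ | ∃ r : I → J → ℝ, (∀ i j, 0 < r i j) ∧ (∀ i, (∑ j, r i j) = 1) ∧
      v = (1 / (β - 1)) * Real.log (∑ i, ∑ j, C i j * r i j ^ (1 - β))} ≤ target := by
    apply ge_of_tendsto htends2
    filter_upwards [self_mem_nhdsWithin] with t ht
    exact csInf_le hbdd ⟨ρ t, (hfeas t ht).1, (hfeas t ht).2, rfl⟩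
  refine le_antisymm hub (le_csInf ?_ hlb)
  exact ⟨_, ρ 1, (hfeas 1 one_pos).1, (hfeas 1 one_pos).2, rfl⟩


/-- Sibson mutual information of order `α` equals the Rényi entropy of order `1/α` of
`X` minus the Sibson conditional entropy of order `α` of `X` given `Y`. -/
theorem sibson_mi_eq_renyi_sub_sibson_cond_entropy
    {X Y : Type*} [Fintype X] [Fintype Y] [Nonempty X] [Nonempty Y]
    (α : ℝ) (hα0 : 0 < α) (hα1 : α ≠ 1)
    (p : X → ℝ) (hp : ∀ x, 0 < p x) (hp1 : (∑ x, p x) = 1)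
    (W : X → Y → ℝ) (hW : ∀ x y, 0 ≤ W x y) (hW1 : ∀ x, (∑ y, W x y) = 1)
    (pt : X → ℝ) (hpt : ∀ x, pt x = p x ^ (1 / α) / ∑ x', p x' ^ (1 / α)) :
    sInf {v : ℝ | ∃ q : Y → ℝ, (∀ y, 0 < q y) ∧ (∑ y, q y) = 1 ∧
        v = (1 / (α - 1)) * Real.log (∑ z : X × Y, p z.1 * W z.1 z.2 ^ α * q z.2 ^ (1 - α))}
      = (1 / (1 - 1 / α)) * Real.log (∑ x, p x ^ (1 / α))
        - sInf {v : ℝ | ∃ r : Y → X → ℝ, (∀ y x, 0 < r y x) ∧ (∀ y, (∑ x, r y x) = 1) ∧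
            v = (α / (1 - α)) * Real.log
                  (∑ z : X × Y, pt z.1 * W z.1 z.2 * r z.2 z.1 ^ (1 - 1 / α))} := by
  have hαne : α ≠ 0 := hα0.ne'
  set A : Y → ℝ := fun y => ∑ x, p x * W x y ^ α with hAdef
  set T : ℝ := ∑ x, p x ^ (1 / α) with hTdef
  have hT : 0 < T := Finset.sum_pos (fun x _ => Real.rpow_pos_of_pos (hp x) _) univ_nonempty
  obtain ⟨x0⟩ := (inferInstance : Nonempty X)
  have hy0 : ∃ y, 0 < W x0 y := by
    by_contra h
    push_neg at h
    have h0 : (∑ y, W x0 y) = 0 :=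
      Finset.sum_eq_zero fun y _ => le_antisymm (h y) (hW x0 y)
    rw [hW1 x0] at h0
    exact one_ne_zero h0
  obtain ⟨y0, hWy0⟩ := hy0
  have hA0 : ∀ y, 0 ≤ A y := fun y =>
    Finset.sum_nonneg fun x _ => mul_nonneg (hp x).le (Real.rpow_nonneg (hW x y) _)
  have hAy0 : 0 < A y0 :=
    lt_of_lt_of_le (mul_pos (hp x0) (Real.rpow_pos_of_pos hWy0 α))
      (Finset.single_le_sum (fun x _ => mul_nonneg (hp x).le (Real.rpow_nonneg (hW x y0) _))
        (mem_univ x0))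
  set M : ℝ := ∑ y, A y ^ (1/α) with hMdef
  have hM : 0 < M :=
    Finset.sum_pos' (fun y _ => Real.rpow_nonneg (hA0 y) _)
      ⟨y0, mem_univ y0, Real.rpow_pos_of_pos hAy0 _⟩
  have hpt0 : ∀ x, 0 < pt x := fun x => by
    rw [hpt x]
    exact div_pos (Real.rpow_pos_of_pos (hp x) _) hT
  -- first sInf
  have hsum1 : ∀ q : Y → ℝ, (∑ z : X × Y, p z.1 * W z.1 z.2 ^ α * q z.2 ^ (1 - α))
      = ∑ y, A y * q y ^ (1 - α) := by
    intro q
    rw [Fintype.sum_prod_type, Finset.sum_comm]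
    refine Finset.sum_congr rfl fun y _ => ?_
    simp [hAdef, Finset.sum_mul]
  have hset1 : {v : ℝ | ∃ q : Y → ℝ, (∀ y, 0 < q y) ∧ (∑ y, q y) = 1 ∧
        v = (1 / (α - 1)) * Real.log (∑ z : X × Y, p z.1 * W z.1 z.2 ^ α * q z.2 ^ (1 - α))}
      = {v : ℝ | ∃ r : Unit → Y → ℝ, (∀ i j, 0 < r i j) ∧ (∀ i, (∑ j, r i j) = 1) ∧
        v = (1 / (α - 1)) * Real.log (∑ i, ∑ j, (fun (_ : Unit) y => A y) i j * r i j ^ (1 - α))} := by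
    ext v
    simp only [Set.mem_setOf_eq]
    constructor
    · rintro ⟨q, h1, h2, rfl⟩
      exact ⟨fun _ => q, fun _ y => h1 y, fun _ => h2, by rw [hsum1]; simp⟩
    · rintro ⟨r, h1, h2, rfl⟩
      exact ⟨r (), fun y => h1 () y, h2 (), by rw [hsum1]; simp⟩
  have h1 : sInf {v : ℝ | ∃ q : Y → ℝ, (∀ y, 0 < q y) ∧ (∑ y, q y) = 1 ∧
        v = (1 / (α - 1)) * Real.log (∑ z : X × Y, p z.1 * W z.1 z.2 ^ α * q z.2 ^ (1 - α))}
      = (1 / (α - 1)) * Real.log (M ^ α) := by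
    rw [hset1, key_opt α hα0 hα1 (fun (_ : Unit) y => A y) (fun _ y => hA0 y)
      ⟨(), y0, hAy0⟩]
    simp only [Fintype.sum_unique, hMdef]
  -- second sInf
  have hβ0 : (0:ℝ) < 1/α := by positivity
  have hβ1 : (1:ℝ)/α ≠ 1 := by
    intro h
    apply hα1
    field_simp at h
    exact h.symm
  have hcoef : (1:ℝ)/(1/α - 1) = α/(1-α) := by
    rw [show (1:ℝ)/α - 1 = (1-α)/α by field_simp, one_div_div]
  have hsum2 : ∀ r : Y → X → ℝ, (∑ z : X × Y, pt z.1 * W z.1 z.2 * r z.2 z.1 ^ (1 - 1/α))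
      = ∑ y, ∑ x, (pt x * W x y) * r y x ^ (1 - 1/α) := by
    intro r
    rw [Fintype.sum_prod_type, Finset.sum_comm]
  have hset2 : {v : ℝ | ∃ r : Y → X → ℝ, (∀ y x, 0 < r y x) ∧ (∀ y, (∑ x, r y x) = 1) ∧
        v = (α / (1 - α)) * Real.log
              (∑ z : X × Y, pt z.1 * W z.1 z.2 * r z.2 z.1 ^ (1 - 1 / α))}
      = {v : ℝ | ∃ r : Y → X → ℝ, (∀ i j, 0 < r i j) ∧ (∀ i, (∑ j, r i j) = 1) ∧
        v = (1 / (1/α - 1)) * Real.log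
              (∑ i, ∑ j, (fun y x => pt x * W x y) i j * r i j ^ (1 - 1/α))} := by
    ext v
    simp only [Set.mem_setOf_eq]
    constructor
    · rintro ⟨r, h1, h2, rfl⟩
      exact ⟨r, h1, h2, by rw [hsum2, hcoef]⟩
    · rintro ⟨r, h1, h2, rfl⟩
      exact ⟨r, h1, h2, by rw [hsum2, hcoef]⟩
  have h2 : sInf {v : ℝ | ∃ r : Y → X → ℝ, (∀ y x, 0 < r y x) ∧ (∀ y, (∑ x, r y x) = 1) ∧
        v = (α / (1 - α)) * Real.log
              (∑ z : X × Y, pt z.1 * W z.1 z.2 * r z.2 z.1 ^ (1 - 1 / α))}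
      = (1 / (1/α - 1)) * Real.log (∑ y, (∑ x, (pt x * W x y) ^ (1/(1/α))) ^ (1/α)) := by
    rw [hset2]
    exact key_opt (1/α) hβ0 hβ1 (fun y x => pt x * W x y)
      (fun y x => mul_nonneg (hpt0 x).le (hW x y)) ⟨y0, x0, mul_pos (hpt0 x0) hWy0⟩
  have hN : (∑ y, (∑ x, (pt x * W x y) ^ (1/(1/α))) ^ (1/α)) = M / T := by
    have hNy : ∀ y, (∑ x, (pt x * W x y) ^ (1/(1/α))) = A y / T ^ α := by
      intro y
      rw [show (∑ x, (pt x * W x y) ^ (1/(1/α))) = ∑ x, (p x * W x y ^ α) / T ^ α from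
        Finset.sum_congr rfl fun x _ => by
          rw [one_div_one_div, hpt x, Real.mul_rpow
              (div_nonneg (Real.rpow_nonneg (hp x).le _) hT.le) (hW x y),
            Real.div_rpow (Real.rpow_nonneg (hp x).le _) hT.le,
            ← Real.rpow_mul (hp x).le, one_div_mul_cancel hαne, Real.rpow_one,
            div_mul_eq_mul_div]]
      rw [← Finset.sum_div]
    rw [show (∑ y, (∑ x, (pt x * W x y) ^ (1/(1/α))) ^ (1/α))
        = ∑ y, A y ^ (1/α) / T from Finset.sum_congr rfl fun y _ => by
      rw [hNy y, Real.div_rpow (hA0 y) (Real.rpow_nonneg hT.le _),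
        ← Real.rpow_mul hT.le, mul_one_div, div_self hαne, Real.rpow_one]]
    rw [← Finset.sum_div]
  rw [h1, h2, hN, Real.log_div hM.ne' hT.ne', Real.log_rpow hM, hcoef]
  have e1 : (1:ℝ)/(1 - 1/α) = α/(α-1) := by
    rw [show (1:ℝ) - 1/α = (α-1)/α by field_simp, one_div_div]
  have e2 : α/(1-α) = -(α/(α-1)) := by
    rw [show (1:ℝ) - α = -(α-1) by ring, div_neg]
  rw [e1, e2]
  ring
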